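/- Let α ∈ (1/2,1), T > 0, x₀ ∈ ℝ^d, and let b : ℝ^d → ℝ^d be globally Lipschitz. Suppose x : [0,T] → ℝ^d is continuous and satisfies the deterministic Volterra equation x(t) = x₀ + ∫_0^t K(t−s) b(x(s)) ds for all t ∈ [0,T]. Then there exists a constant c > 0 such that for all 0 ≤ s ≤ t ≤ T, ‖x(t) − x(s)‖ ≤ c (t−s)^α; that is, x is α-Hölder continuous on [0,T]. -/

import Mathlib

open MeasureTheory intervalIntegral Real

/-- Fractional kernel `K(u) = u^(α-1)/Γ(α)` for `u > 0`, `0` otherwise. -/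
noncomputable def Kker (α u : ℝ) : ℝ := if 0 < u then u ^ (α - 1) / Real.Gamma α else 0

/-- First-order resolvent kernel `L(u) = u^(-α)/Γ(1-α)` for `u > 0`, `0` otherwise. -/
noncomputable def Lker (α u : ℝ) : ℝ := if 0 < u then u ^ (-α) / Real.Gamma (1 - α) else 0

/-- Discretization map `φ_h(t) = h⌊t/h⌋`. -/
noncomputable def phi (h t : ℝ) : ℝ := h * (⌊t / h⌋ : ℝ)

/-- `χ_h(u) = u - φ_h(u)`. -/
noncomputable def chi (h u : ℝ) : ℝ := u - phi h u

/-- Discretized kernel `K^{(h)}`. -/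
noncomputable def Kh (α h t s : ℝ) : ℝ :=
  if 0 ≤ s ∧ s < phi h t then Kker α (phi h t - s) else 0

/-- The kernel `g^{(h)}(t,s) = ∫_s^t L(t-v) K^{(h)}(v,s) dv`. -/
noncomputable def gh (α h t s : ℝ) : ℝ := ∫ v in s..t, Lker α (t - v) * Kh α h v s

lemma Kker_nonneg {α : ℝ} (hα : 0 < α) (u : ℝ) : 0 ≤ Kker α u := by
  unfold Kker
  split
  · exact div_nonneg (Real.rpow_nonneg (le_of_lt (by assumption)) _) (Real.Gamma_pos_of_pos hα).le
  · exact le_refl 0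

lemma Kker_ae_eq {α : ℝ} {a c t : ℝ} (hct : c ≤ t) :
    ∀ᵐ u, u ∈ Set.Ioc a c → Kker α (t - u) = (t - u) ^ (α - 1) / Real.Gamma α := by
  rw [ae_iff]
  refine measure_mono_null (fun u hu => ?_) (measure_singleton t)
  simp only [Set.mem_setOf_eq, _root_.not_imp] at hu
  obtain ⟨hu1, hu2⟩ := hu
  by_contra h
  have hut : u < t := lt_of_le_of_ne (hu1.2.trans hct) (fun he => h (by simp [he]))
  exact hu2 (by simp [Kker, sub_pos.2 hut])

lemma Kker_intervalIntegrable {α : ℝ} (hα : 0 < α) {a c t : ℝ} (hac : a ≤ c) (hct : c ≤ t) :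
    IntervalIntegrable (fun u => Kker α (t - u)) volume a c := by
  have hg : IntervalIntegrable (fun u => (t - u) ^ (α - 1) / Real.Gamma α) volume a c := by
    have h1 : IntervalIntegrable (fun v : ℝ => v ^ (α - 1)) volume (t - a) (t - c) :=
      intervalIntegrable_rpow' (by linarith)
    simpa using (h1.comp_sub_left t).div_const (Real.Gamma α)
  rw [intervalIntegrable_iff_integrableOn_Ioc_of_le hac] at hg ⊢
  refine hg.congr_fun_ae ?_
  have := Kker_ae_eq (α := α) (a := a) hct
  rw [Filter.EventuallyEq, ae_restrict_iff' measurableSet_Ioc]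
  filter_upwards [this] with u hu hu2
  exact (hu hu2).symm

lemma Kker_integral' {α : ℝ} (hα : 0 < α) {a c t : ℝ} (hac : a ≤ c) (hct : c ≤ t) :
    ∫ u in a..c, Kker α (t - u) = ((t - a) ^ α - (t - c) ^ α) / (α * Real.Gamma α) := by
  have h1 : ∫ u in a..c, Kker α (t - u) = ∫ u in a..c, (t - u) ^ (α - 1) / Real.Gamma α := by
    apply intervalIntegral.integral_congr_ae
    have := Kker_ae_eq (α := α) (a := a) hct
    filter_upwards [this] with u hu hu2
    exact hu (by rwa [Set.uIoc_of_le hac] at hu2)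
  rw [h1, intervalIntegral.integral_div, intervalIntegral.integral_comp_sub_left
    (fun v => v ^ (α - 1)) t, integral_rpow (Or.inl (by linarith))]
  rw [sub_add_cancel, div_div]

lemma Kker_smul_intervalIntegrable {α : ℝ} (hα : 0 < α) {a c t T : ℝ} (hac : a ≤ c)
    (hct : c ≤ t) {E : Type*} [NormedAddCommGroup E] [NormedSpace ℝ E] {f : ℝ → E}
    (hf : ContinuousOn f (Set.Icc 0 T)) (h0a : 0 ≤ a) (htT : t ≤ T) :
    IntervalIntegrable (fun u => Kker α (t - u) • f u) volume a c := by
  have hK := Kker_intervalIntegrable hα hac hct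
  rw [intervalIntegrable_iff_integrableOn_Ioc_of_le hac] at hK ⊢
  have hsub : Set.Ioc a c ⊆ Set.Icc 0 T :=
    fun u hu => ⟨h0a.trans hu.1.le, hu.2.trans (hct.trans htT)⟩
  have hfm : AEStronglyMeasurable f (volume.restrict (Set.Ioc a c)) :=
    (hf.mono hsub).aestronglyMeasurable measurableSet_Ioc
  obtain ⟨M, hM⟩ := isCompact_Icc.exists_bound_of_continuousOn hf
  refine Integrable.smul_of_top_left hK (memLp_top_of_bound hfm M ?_)
  rw [ae_restrict_iff' measurableSet_Ioc]
  exact Filter.Eventually.of_forall (fun u hu => hM u (hsub hu))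

/-- the solution of the deterministic Volterra equation is `α`-Hölder on `[0,T]`. -/
theorem deterministic_volterra_holder (α T : ℝ) (hα : α ∈ Set.Ioo (1/2 : ℝ) 1) (hT : 0 < T)
    (d : ℕ) (x₀ : EuclideanSpace ℝ (Fin d))
    (b : EuclideanSpace ℝ (Fin d) → EuclideanSpace ℝ (Fin d))
    (hb : ∃ Lip : ℝ, ∀ y z, ‖b y - b z‖ ≤ Lip * ‖y - z‖)
    (x : ℝ → EuclideanSpace ℝ (Fin d)) (hx : ContinuousOn x (Set.Icc 0 T))
    (heq : ∀ t ∈ Set.Icc (0:ℝ) T,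
      x t = x₀ + ∫ s in (0:ℝ)..t, Kker α (t - s) • b (x s)) :
    ∃ c > 0, ∀ s t : ℝ, 0 ≤ s → s ≤ t → t ≤ T →
      ‖x t - x s‖ ≤ c * (t - s) ^ α := by
  obtain ⟨hα1, hα2⟩ := hα
  have hα0 : 0 < α := by linarith
  have hΓ : 0 < Real.Gamma α := Real.Gamma_pos_of_pos hα0
  have hΓα : 0 < α * Real.Gamma α := by positivity
  obtain ⟨Lip, hLip⟩ := hb
  have hbc : Continuous b := by
    have : LipschitzWith (Real.toNNReal Lip) b := by
      refine LipschitzWith.of_dist_le_mul fun y z => ?_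
      rw [dist_eq_norm, dist_eq_norm]
      exact (hLip y z).trans
        (mul_le_mul_of_nonneg_right (Real.le_coe_toNNReal Lip) (norm_nonneg _))
    exact this.continuous
  have hcont : ContinuousOn (fun u => b (x u)) (Set.Icc 0 T) := hbc.comp_continuousOn hx
  obtain ⟨C, hC⟩ := isCompact_Icc.exists_bound_of_continuousOn hcont
  set M := max C 0 with hMdef
  have hM0 : 0 ≤ M := le_max_right _ _
  have hMb : ∀ u ∈ Set.Icc (0:ℝ) T, ‖b (x u)‖ ≤ M := fun u hu => (hC u hu).trans (le_max_left _ _)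
  refine ⟨2 * M / (α * Real.Gamma α) + 1, by positivity, fun s t hs hst htT => ?_⟩
  rcases eq_or_lt_of_le hst with rfl | hst'
  · simp [Real.zero_rpow (ne_of_gt hα0)]
  · have hsT : s ≤ T := hst.trans htT
    have hsmem : s ∈ Set.Icc (0:ℝ) T := ⟨hs, hsT⟩
    have htmem : t ∈ Set.Icc (0:ℝ) T := ⟨hs.trans hst, htT⟩
    have hIts : IntervalIntegrable (fun u => Kker α (t - u) • b (x u)) volume 0 s :=
      Kker_smul_intervalIntegrable hα0 hs hst hcont le_rfl htT
    have hIst : IntervalIntegrable (fun u => Kker α (t - u) • b (x u)) volume s t :=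
      Kker_smul_intervalIntegrable hα0 hst le_rfl hcont hs htT
    have hIss : IntervalIntegrable (fun u => Kker α (s - u) • b (x u)) volume 0 s :=
      Kker_smul_intervalIntegrable hα0 hs le_rfl hcont le_rfl hsT
    have hsplit : (∫ u in (0:ℝ)..t, Kker α (t - u) • b (x u))
        = (∫ u in (0:ℝ)..s, Kker α (t - u) • b (x u))
          + ∫ u in s..t, Kker α (t - u) • b (x u) :=
      (intervalIntegral.integral_add_adjacent_intervals hIts hIst).symm
    have hIdiff : IntervalIntegrable
        (fun u => (Kker α (t - u) - Kker α (s - u)) • b (x u)) volume 0 s := by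
      have := hIts.sub hIss
      simpa [sub_smul] using this
    have hdiff : x t - x s
        = (∫ u in (0:ℝ)..s, (Kker α (t - u) - Kker α (s - u)) • b (x u))
          + ∫ u in s..t, Kker α (t - u) • b (x u) := by
      rw [heq t htmem, heq s hsmem, hsplit]
      have h2 : (∫ u in (0:ℝ)..s, (Kker α (t - u) - Kker α (s - u)) • b (x u))
          = (∫ u in (0:ℝ)..s, Kker α (t - u) • b (x u))
            - ∫ u in (0:ℝ)..s, Kker α (s - u) • b (x u) := by
        rw [← intervalIntegral.integral_sub hIts hIss]
        congr 1
        ext u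
        rw [sub_smul]
      rw [h2]
      abel
    have hB : ‖∫ u in s..t, Kker α (t - u) • b (x u)‖
        ≤ M * (t - s) ^ α / (α * Real.Gamma α) := by
      calc ‖∫ u in s..t, Kker α (t - u) • b (x u)‖
          ≤ ∫ u in s..t, ‖Kker α (t - u) • b (x u)‖ :=
            intervalIntegral.norm_integral_le_integral_norm hst
        _ ≤ ∫ u in s..t, Kker α (t - u) * M := by
            apply intervalIntegral.integral_mono_on hst hIst.norm
              ((Kker_intervalIntegrable hα0 hst le_rfl).mul_const M)
            intro u hu
            rw [norm_smul, Real.norm_eq_abs, abs_of_nonneg (Kker_nonneg hα0 _)]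
            exact mul_le_mul_of_nonneg_left (hMb u ⟨hs.trans hu.1, hu.2.trans htT⟩)
              (Kker_nonneg hα0 _)
        _ = M * (t - s) ^ α / (α * Real.Gamma α) := by
            rw [intervalIntegral.integral_mul_const, Kker_integral' hα0 hst le_rfl, sub_self,
              Real.zero_rpow (ne_of_gt hα0)]
            ring
    have hA : ‖∫ u in (0:ℝ)..s, (Kker α (t - u) - Kker α (s - u)) • b (x u)‖
        ≤ M * (t - s) ^ α / (α * Real.Gamma α) := by
      have hptwise : ∀ᵐ u ∂(volume.restrict (Set.Icc 0 s)),
          ‖(Kker α (t - u) - Kker α (s - u)) • b (x u)‖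
            ≤ (Kker α (s - u) - Kker α (t - u)) * M := by
        rw [ae_restrict_iff' measurableSet_Icc, ae_iff]
        refine measure_mono_null (fun u hu => ?_) (measure_singleton s)
        simp only [Set.mem_setOf_eq, _root_.not_imp, not_le] at hu
        obtain ⟨hu1, hu2⟩ := hu
        by_contra hne
        have hus : u < s := lt_of_le_of_ne hu1.2 (fun he => hne he)
        have hsu : 0 < s - u := sub_pos.2 hus
        have htu : 0 < t - u := by linarith
        have hle : Kker α (t - u) ≤ Kker α (s - u) := by
          simp only [Kker, if_pos hsu, if_pos htu]
          apply div_le_div_of_nonneg_right (c := Real.Gamma α) ?_ hΓ.le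
          exact Real.rpow_le_rpow_of_nonpos hsu (by linarith) (by linarith)
        have : ‖(Kker α (t - u) - Kker α (s - u)) • b (x u)‖
            ≤ (Kker α (s - u) - Kker α (t - u)) * M := by
          rw [norm_smul, Real.norm_eq_abs, abs_sub_comm,
            abs_of_nonneg (sub_nonneg.2 hle)]
          exact mul_le_mul_of_nonneg_left
            (hMb u ⟨hu1.1, hu1.2.trans hsT⟩) (sub_nonneg.2 hle)
        exact absurd this (not_le.2 hu2)
      have hIKd : IntervalIntegrable
          (fun u => (Kker α (s - u) - Kker α (t - u)) * M) volume 0 s :=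
        ((Kker_intervalIntegrable hα0 hs le_rfl).sub
          (Kker_intervalIntegrable hα0 hs hst)).mul_const M
      calc ‖∫ u in (0:ℝ)..s, (Kker α (t - u) - Kker α (s - u)) • b (x u)‖
          ≤ ∫ u in (0:ℝ)..s, ‖(Kker α (t - u) - Kker α (s - u)) • b (x u)‖ :=
            intervalIntegral.norm_integral_le_integral_norm hs
        _ ≤ ∫ u in (0:ℝ)..s, (Kker α (s - u) - Kker α (t - u)) * M :=
            intervalIntegral.integral_mono_ae_restrict hs hIdiff.norm hIKd hptwise
        _ = M * (s ^ α - t ^ α + (t - s) ^ α) / (α * Real.Gamma α) := by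
            rw [intervalIntegral.integral_mul_const,
              intervalIntegral.integral_sub (Kker_intervalIntegrable hα0 hs le_rfl)
                (Kker_intervalIntegrable hα0 hs hst),
              Kker_integral' hα0 hs le_rfl, Kker_integral' hα0 hs hst, sub_self,
              Real.zero_rpow (ne_of_gt hα0), sub_zero, sub_zero]
            ring
        _ ≤ M * (t - s) ^ α / (α * Real.Gamma α) := by
            have hsa : s ^ α ≤ t ^ α := Real.rpow_le_rpow hs hst hα0.le
            apply div_le_div_of_nonneg_right ?_ hΓα.le
            nlinarith [Real.rpow_nonneg (sub_nonneg.2 hst) α]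
    have hpow : (0:ℝ) ≤ (t - s) ^ α := Real.rpow_nonneg (sub_nonneg.2 hst) α
    calc ‖x t - x s‖
        ≤ ‖∫ u in (0:ℝ)..s, (Kker α (t - u) - Kker α (s - u)) • b (x u)‖
          + ‖∫ u in s..t, Kker α (t - u) • b (x u)‖ := by
          rw [hdiff]; exact norm_add_le _ _
      _ ≤ M * (t - s) ^ α / (α * Real.Gamma α) + M * (t - s) ^ α / (α * Real.Gamma α) :=
          add_le_add hA hB
      _ ≤ (2 * M / (α * Real.Gamma α) + 1) * (t - s) ^ α := by
          rw [add_mul, one_mul]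
          have : M * (t - s) ^ α / (α * Real.Gamma α) + M * (t - s) ^ α / (α * Real.Gamma α)
              = 2 * M / (α * Real.Gamma α) * (t - s) ^ α := by ring
          linarith
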